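/- If p ≥ 5 is a prime, then v_{(p+3)/2} ≡ 2p^3·(1-p)·(p-1)!·4^{p-1} (mod p^5). -/

import Mathlib

open Polynomial Finset

noncomputable def v (n : ℕ) : ℤ :=
  if n = 0 then -1 else
  ((1 - X) * ∏ j ∈ Finset.range (2 * n - 2),
      (C ((2 * n : ℤ) - 3 - (j : ℤ)) + C (j : ℤ) * X)).coeff (n - 1)



section helpers

lemma prod_one_sub_eq {R : Type*} [CommRing R] (π : R) (hπ : π * π = 0)
    (s : Finset ℕ) (b : ℕ → R) :
    ∏ i ∈ s, (1 - π * b i) = 1 - π * ∑ i ∈ s, b i := by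
  classical
  induction s using Finset.induction_on with
  | empty => simp
  | insert a s ha ih =>
    rw [Finset.prod_insert ha, ih, Finset.sum_insert ha]
    have : (1 - π * b a) * (1 - π * ∑ i ∈ s, b i)
        = 1 - π * (b a + ∑ i ∈ s, b i) + (b a * ∑ i ∈ s, b i) * (π * π) := by ring
    rw [this, hπ, mul_zero, add_zero]

lemma sum_range_two_mul {M : Type*} [AddCommMonoid M] (f : ℕ → M) (k : ℕ) :
    ∑ i ∈ range (2 * k), f i = ∑ j ∈ range k, (f (2 * j) + f (2 * j + 1)) := by
  induction k with
  | zero => simp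
  | succ k ih =>
    have h2 : 2 * (k + 1) = (2 * k + 1) + 1 := by ring
    rw [h2, Finset.sum_range_succ, Finset.sum_range_succ, ih, Finset.sum_range_succ,
      add_assoc]

lemma sum_powersetCard_one {R : Type*} [CommRing R] (s : Finset ℕ) (b : ℕ → R) :
    ∑ t ∈ s.powersetCard 1, ∏ i ∈ t, b i = ∑ i ∈ s, b i := by
  rw [Finset.powersetCard_one, Finset.sum_map]
  simp

lemma two_mul_esymm2 {R : Type*} [CommRing R] (b : ℕ → R) (s : Finset ℕ) :
    2 * ∑ t ∈ s.powersetCard 2, ∏ i ∈ t, b i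
      = (∑ i ∈ s, b i) ^ 2 - ∑ i ∈ s, (b i) ^ 2 := by
  classical
  induction s using Finset.induction_on with
  | empty =>
    rw [show (2:ℕ) = 0 + 1 + 1 from rfl, Finset.powersetCard_eq_empty.2 (by simp)]
    simp
  | insert a s ha ih =>
    rw [Finset.powersetCard_succ_insert ha, Finset.sum_union, Finset.sum_image,
      Finset.sum_insert ha, Finset.sum_insert ha]
    · have himg : ∑ t ∈ s.powersetCard 1, ∏ i ∈ insert a t, b i
          = b a * ∑ i ∈ s, b i := by
        rw [← sum_powersetCard_one s b, Finset.mul_sum]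
        refine Finset.sum_congr rfl fun t ht => ?_
        rw [Finset.mem_powersetCard] at ht
        have hat : a ∉ t := fun hc => ha (ht.1 hc)
        rw [Finset.prod_insert hat]
      rw [mul_add, ih, himg]
      ring
    · intro u hu v hv huv
      rw [Finset.mem_coe, Finset.mem_powersetCard] at hu hv
      have hau : a ∉ u := fun hc => ha (hu.1 hc)
      have hav : a ∉ v := fun hc => ha (hv.1 hc)
      rw [← Finset.erase_insert hau, huv, Finset.erase_insert hav]
    · rw [Finset.disjoint_left]
      intro t ht htimg
      rw [Finset.mem_powersetCard] at ht
      rcases Finset.mem_image.1 htimg with ⟨u, _, rfl⟩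
      exact ha (ht.1 (Finset.mem_insert_self a u))

end helpers

lemma prod_add_key {R : Type*} [CommRing R] (π : R) (hπ3 : π ^ 3 = 0)
    (y : R[X]) (s : Finset ℕ) (b : ℕ → R)
    (h1 : π * ∑ i ∈ s, b i = 0)
    (h2 : π ^ 2 * ∑ t ∈ s.powersetCard 2, ∏ i ∈ t, b i = 0) :
    ∏ i ∈ s, (y + C (π * b i)) = y ^ s.card := by
  classical
  have hfact : ∀ i, y + C (π * b i) = C (π * b i) + y := fun i => add_comm _ _
  simp only [hfact]
  rw [Finset.prod_add, Finset.sum_powerset]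
  have hterm : ∀ j ∈ range (s.card + 1),
      (∑ t ∈ s.powersetCard j, (∏ i ∈ t, C (π * b i)) * ∏ i ∈ s \ t, y)
        = C (π ^ j * ∑ t ∈ s.powersetCard j, ∏ i ∈ t, b i) * y ^ (s.card - j) := by
    intro j hj
    rw [map_mul, map_sum, Finset.mul_sum, Finset.sum_mul]
    refine Finset.sum_congr rfl fun t ht => ?_
    rw [Finset.mem_powersetCard] at ht
    rw [Finset.prod_const, Finset.card_sdiff_of_subset ht.1, ht.2]
    have : ∏ i ∈ t, C (π * b i) = C (π ^ j * ∏ i ∈ t, b i) := by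
      rw [← ht.2]
      simp only [map_mul, Finset.prod_mul_distrib, Finset.prod_const, map_pow, map_prod]
    rw [this, map_mul, map_pow, mul_assoc, mul_comm (C (∏ i ∈ t, b i)) _, ← mul_assoc]
  rw [Finset.sum_congr rfl hterm]
  rw [Finset.sum_eq_single_of_mem 0 (Finset.mem_range.2 (Nat.succ_pos _))]
  · rw [Finset.powersetCard_zero, Finset.sum_singleton, Finset.prod_empty, pow_zero,
      one_mul, map_one, one_mul, Nat.sub_zero]
  · intro j hj hj0
    match j, hj0 with
    | 1, _ => rw [pow_one, sum_powersetCard_one, h1, map_zero, zero_mul]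
    | 2, _ => rw [h2, map_zero, zero_mul]
    | (m+3), _ =>
        have : π ^ (m + 3) = π ^ 3 * π ^ m := by ring
        rw [this, hπ3, zero_mul, zero_mul, map_zero, zero_mul]



lemma zmod_mul_inv_eq {n : ℕ} (a b : ZMod n) (ha : IsUnit a) (hb : IsUnit b) :
    (a * b)⁻¹ = a⁻¹ * b⁻¹ := by
  have hab : IsUnit (a * b) := ha.mul hb
  have h1 : (a * b)⁻¹ * (a * b) = 1 := ZMod.inv_mul_of_unit _ hab
  calc (a*b)⁻¹ = (a*b)⁻¹ * (a * a⁻¹) * (b * b⁻¹) := by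
        rw [ZMod.mul_inv_of_unit a ha, ZMod.mul_inv_of_unit b hb]; ring
    _ = ((a*b)⁻¹ * (a*b)) * (a⁻¹ * b⁻¹) := by ring
    _ = a⁻¹ * b⁻¹ := by rw [h1, one_mul]

lemma zmod_hom_inv {n m : ℕ} (f : ZMod n →+* ZMod m) (a : ZMod n) (ha : IsUnit a) :
    f a⁻¹ = (f a)⁻¹ := by
  have h1 : f a * f a⁻¹ = 1 := by rw [← map_mul, ZMod.mul_inv_of_unit a ha, map_one]
  have h2 : (f a)⁻¹ * f a = 1 := ZMod.inv_mul_of_unit _ (ha.map f)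
  calc f a⁻¹ = ((f a)⁻¹ * f a) * f a⁻¹ := by rw [h2, one_mul]
    _ = (f a)⁻¹ * (f a * f a⁻¹) := by ring
    _ = (f a)⁻¹ := by rw [h1, mul_one]

section base

variable {p : ℕ} (hp : p.Prime) (hp5 : 5 ≤ p)
include hp hp5

lemma unit_aux (e : ℕ) {a : ℕ} (h1 : 0 < a) (h2 : a < p) : IsUnit ((a : ℕ) : ZMod (p ^ e)) := by
  rw [ZMod.isUnit_iff_coprime]
  apply Nat.Coprime.pow_right
  have : ¬ p ∣ a := fun hd => absurd (Nat.le_of_dvd h1 hd) (by omega)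
  exact ((hp.coprime_iff_not_dvd).2 this).symm

lemma lift_zero {e f : ℕ} (hef : e ≤ f) (x : ZMod (p ^ f))
    (hx : ZMod.castHom (pow_dvd_pow p hef) (ZMod (p ^ e)) x = 0) :
    ∃ y : ZMod (p ^ f), x = ((p : ZMod (p ^ f))) ^ e * y := by
  haveI : NeZero (p ^ f) := ⟨pow_ne_zero _ (by omega)⟩
  have hxv : ((x.val : ℕ) : ZMod (p ^ f)) = x := ZMod.natCast_rightInverse x
  rw [← hxv, map_natCast] at hx
  obtain ⟨c, hc⟩ := (ZMod.natCast_eq_zero_iff _ _).1 hx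
  refine ⟨(c : ZMod (p ^ f)), ?_⟩
  rw [← hxv, hc]
  push_cast
  ring

lemma pow_self_zero (e : ℕ) : ((p : ZMod (p ^ e))) ^ e = 0 := by
  have := ZMod.natCast_self (p ^ e)
  push_cast at this
  exact this

end base

section modp
variable {p : ℕ} (hp : p.Prime) (hp5 : 5 ≤ p)

lemma sum_shift {M : Type*} [AddCommMonoid M] (f : ℕ → M) (n : ℕ) (hn : 0 < n) :
    ∑ i ∈ range n, f i = (∑ i ∈ range (n - 1), f (i + 1)) + f 0 := by
  obtain ⟨m, rfl⟩ : ∃ m, n = m + 1 := ⟨n - 1, by omega⟩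
  simp [Finset.sum_range_succ']

lemma sum_range_cast [NeZero p] {M : Type*} [AddCommMonoid M] (f : ZMod p → M) :
    ∑ i ∈ range p, f ((i : ℕ) : ZMod p) = ∑ x : ZMod p, f x := by
  apply Finset.sum_nbij' (fun i => ((i : ℕ) : ZMod p)) (fun x => x.val)
  · intro a _; exact Finset.mem_univ _
  · intro x _; exact Finset.mem_range.2 (ZMod.val_lt x)
  · intro a ha; exact ZMod.val_cast_of_lt (Finset.mem_range.1 ha)
  · intro x _; exact ZMod.natCast_rightInverse x
  · intro a _; rfl

include hp hp5

lemma two_ne (e : ℕ) : ((2 :ℕ) : ZMod p) ≠ 0 := by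
  rw [Ne, ZMod.natCast_eq_zero_iff]
  intro hd
  have := Nat.le_of_dvd (by norm_num) hd
  omega

lemma sum_univ_id [NeZero p] : ∑ x : ZMod p, x = 0 := by
  haveI : NeZero p := ⟨by omega⟩
  have h := Equiv.sum_comp (Equiv.neg (ZMod p)) (fun x => x)
  simp only [Equiv.neg_apply] at h
  have h2 : ∑ x : ZMod p, x = - ∑ x : ZMod p, x :=
    h.symm.trans (Finset.sum_neg_distrib _)
  have h3 : ((2:ℕ) : ZMod p) * ∑ x : ZMod p, x = 0 := by
    push_cast
    rw [two_mul]
    nth_rewrite 2 [h2]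
    ring
  haveI : Fact p.Prime := ⟨hp⟩
  exact (mul_eq_zero.1 h3).resolve_left (two_ne hp hp5 1)

lemma sum_univ_sq [NeZero p] : ∑ x : ZMod p, x ^ 2 = 0 := by
  haveI : NeZero p := ⟨by omega⟩
  haveI : Fact p.Prime := ⟨hp⟩
  have h2 : (2 : ZMod p) ≠ 0 := by
    have := two_ne hp hp5 1; push_cast at this; exact this
  have h := Equiv.sum_comp (Equiv.mulLeft₀ (2 : ZMod p) h2) (fun x => x ^ 2)
  simp only [Equiv.mulLeft₀_apply, mul_pow] at h
  have h3 : ((3:ℕ):ZMod p) * ∑ x : ZMod p, x ^ 2 = 0 := by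
    have : ((3:ℕ):ZMod p) = (2:ZMod p)^2 - 1 := by push_cast; ring
    rw [this, sub_mul, Finset.mul_sum, one_mul, sub_eq_zero]
    exact h
  have hne : ((3:ℕ) : ZMod p) ≠ 0 := by
    rw [Ne, ZMod.natCast_eq_zero_iff]
    intro hd
    have := Nat.le_of_dvd (by norm_num) hd
    omega
  exact (mul_eq_zero.1 h3).resolve_left hne

lemma S1 : ∑ i ∈ range (p - 1), (((i + 1 : ℕ)) : ZMod p)⁻¹ = 0 := by
  haveI : NeZero p := ⟨by omega⟩
  haveI : Fact p.Prime := ⟨hp⟩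
  have key := sum_range_cast (p := p) (fun x : ZMod p => x⁻¹)
  have hsh := sum_shift (fun i => ((i : ℕ) : ZMod p)⁻¹) p (by omega)
  have hall : ∑ x : ZMod p, x⁻¹ = ∑ x : ZMod p, x := by
    have := Equiv.sum_comp (Equiv.inv (ZMod p)) (fun x => x⁻¹)
    simp only [Equiv.inv_apply, inv_inv] at this
    exact this.symm
  rw [hsh] at key
  beta_reduce at key
  simp only [Nat.cast_zero, inv_zero, add_zero] at key
  rw [key, hall, sum_univ_id hp hp5]

lemma S2 : ∑ i ∈ range (p - 1), ((((i + 1 : ℕ)) : ZMod p)⁻¹) ^ 2 = 0 := by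
  haveI : NeZero p := ⟨by omega⟩
  haveI : Fact p.Prime := ⟨hp⟩
  have key := sum_range_cast (p := p) (fun x : ZMod p => (x⁻¹) ^ 2)
  have hsh := sum_shift (fun i => (((i : ℕ) : ZMod p)⁻¹) ^ 2) p (by omega)
  have hall : ∑ x : ZMod p, (x⁻¹) ^ 2 = ∑ x : ZMod p, x ^ 2 := by
    have := Equiv.sum_comp (Equiv.inv (ZMod p)) (fun x => (x⁻¹) ^ 2)
    simp only [Equiv.inv_apply, inv_inv] at this
    exact this.symm
  rw [hsh] at key
  beta_reduce at key
  simp only [Nat.cast_zero, inv_zero, add_zero, zero_pow, OfNat.ofNat_ne_zero,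
    ne_eq, not_false_eq_true] at key
  rw [key, hall, sum_univ_sq hp hp5]

end modp

section wolsten
variable {p : ℕ} (hp : p.Prime) (hp5 : 5 ≤ p)
include hp hp5

lemma lift_zero' {f m : ℕ} (hm : m ∣ p ^ f) (x : ZMod (p ^ f))
    (hx : ZMod.castHom hm (ZMod m) x = 0) :
    ∃ y : ZMod (p ^ f), x = ((m : ℕ) : ZMod (p ^ f)) * y := by
  haveI : NeZero (p ^ f) := ⟨pow_ne_zero _ (by omega)⟩
  have hxv : ((x.val : ℕ) : ZMod (p ^ f)) = x := ZMod.natCast_rightInverse x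
  rw [← hxv, map_natCast] at hx
  obtain ⟨c, hc⟩ := (ZMod.natCast_eq_zero_iff _ _).1 hx
  exact ⟨(c : ZMod (p ^ f)), by rw [← hxv, hc]; push_cast; ring⟩

lemma cast_inv_sum {f m : ℕ} (hm : m ∣ p ^ f) (g : ℕ → ℕ)
    (hg : ∀ i ∈ range (p - 1), ¬ p ∣ g i) :
    (ZMod.castHom hm (ZMod m))
        (∑ i ∈ range (p - 1), (((g i : ℕ)) : ZMod (p ^ f))⁻¹)
      = ∑ i ∈ range (p - 1), (((g i : ℕ)) : ZMod m)⁻¹ := by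
  rw [map_sum]
  refine Finset.sum_congr rfl fun i hi => ?_
  have hu : IsUnit ((g i : ℕ) : ZMod (p ^ f)) := by
    rw [ZMod.isUnit_iff_coprime]
    exact (((hp.coprime_iff_not_dvd).2 (hg i hi)).symm).pow_right _
  rw [zmod_hom_inv _ _ hu, map_natCast]

lemma prodsum_zero :
    ∑ i ∈ range (p - 1), ((((i + 1) * (p - 1 - i) : ℕ)) : ZMod p)⁻¹ = 0 := by
  haveI : Fact p.Prime := ⟨hp⟩
  have hcongr : ∀ i ∈ range (p - 1),
      ((((i + 1) * (p - 1 - i) : ℕ)) : ZMod p)⁻¹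
        = -(((((i + 1) : ℕ) : ZMod p))⁻¹) ^ 2 := by
    intro i hi
    rw [Finset.mem_range] at hi
    have h1 : (((p - 1 - i : ℕ)) : ZMod p) = -(((i + 1 : ℕ)) : ZMod p) := by
      rw [show p - 1 - i = p - (i + 1) by omega, Nat.cast_sub (by omega), ZMod.natCast_self]
      ring
    have hmul : (((i + 1) * (p - 1 - i) : ℕ) : ZMod p)
        = ((i+1:ℕ) : ZMod p) * ((p-1-i:ℕ) : ZMod p) := by push_cast; ring
    rw [hmul, h1]
    have : ((i+1:ℕ) : ZMod p) * -((i+1:ℕ) : ZMod p) = -(((i+1:ℕ) : ZMod p)) ^ 2 := by ring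
    rw [this, inv_neg, inv_pow]
  rw [Finset.sum_congr rfl hcongr, Finset.sum_neg_distrib, S2 hp hp5, neg_zero]

lemma Hbig2_zero : ∑ i ∈ range (p - 1), (((i + 1 : ℕ)) : ZMod (p ^ 2))⁻¹ = 0 := by
  set G := ZMod (p ^ 2)
  set H := ∑ i ∈ range (p - 1), (((i + 1 : ℕ)) : G)⁻¹ with hH
  have hunit : ∀ a : ℕ, 0 < a → a < p → IsUnit ((a : ℕ) : G) := fun a h1 h2 =>
    unit_aux hp hp5 2 h1 h2
  have hrefl := Finset.sum_range_reflect (fun i => (((i + 1 : ℕ)) : G)⁻¹) (p - 1)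
  have h2H : 2 * H = (p : G) * ∑ i ∈ range (p - 1), ((((i + 1) * (p - 1 - i) : ℕ)) : G)⁻¹ := by
    rw [two_mul, Finset.mul_sum]
    nth_rewrite 1 [hH]
    rw [← hrefl]
    beta_reduce
    rw [← Finset.sum_add_distrib]
    refine Finset.sum_congr rfl fun i hi => ?_
    rw [Finset.mem_range] at hi
    have hia : p - 1 - 1 - i + 1 = p - 1 - i := by omega
    rw [hia]
    have ha : IsUnit (((i + 1 : ℕ)) : G) := hunit _ (by omega) (by omega)
    have hc : IsUnit (((p - 1 - i : ℕ)) : G) := hunit _ (by omega) (by omega)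
    have hmul : (((i + 1) * (p - 1 - i) : ℕ) : G) = ((i+1:ℕ):G) * ((p-1-i:ℕ):G) := by
      rw [Nat.cast_mul]
    rw [hmul, zmod_mul_inv_eq _ _ ha hc]
    have hsum : ((i+1:ℕ):G) + ((p-1-i:ℕ):G) = (p : G) := by
      rw [← Nat.cast_add, show (i+1) + (p-1-i) = p by omega]
    calc (((p-1-i:ℕ)):G)⁻¹ + (((i+1:ℕ)):G)⁻¹
        = ((i+1:ℕ):G)⁻¹ * ((p-1-i:ℕ):G)⁻¹ * (((i+1:ℕ):G) + ((p-1-i:ℕ):G)) := by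
          have e1 : ((i+1:ℕ):G)⁻¹ * ((p-1-i:ℕ):G)⁻¹ * ((i+1:ℕ):G) = ((p-1-i:ℕ):G)⁻¹ := by
            have h : ((i+1:ℕ):G)⁻¹ * ((p-1-i:ℕ):G)⁻¹ * ((i+1:ℕ):G)
                = ((p-1-i:ℕ):G)⁻¹ * (((i+1:ℕ):G)⁻¹ * ((i+1:ℕ):G)) := by ring
            rw [h, ZMod.inv_mul_of_unit _ ha, mul_one]
          have e2 : ((i+1:ℕ):G)⁻¹ * ((p-1-i:ℕ):G)⁻¹ * ((p-1-i:ℕ):G) = ((i+1:ℕ):G)⁻¹ := by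
            have h : ((i+1:ℕ):G)⁻¹ * ((p-1-i:ℕ):G)⁻¹ * ((p-1-i:ℕ):G)
                = ((i+1:ℕ):G)⁻¹ * (((p-1-i:ℕ):G)⁻¹ * ((p-1-i:ℕ):G)) := by ring
            rw [h, ZMod.inv_mul_of_unit _ hc, mul_one]
          rw [mul_add, e1, e2]
    _ = (p : G) * (((i+1:ℕ):G)⁻¹ * ((p-1-i:ℕ):G)⁻¹) := by rw [hsum]; ring
  have hT : (p : G) * ∑ i ∈ range (p - 1), ((((i + 1) * (p - 1 - i) : ℕ)) : G)⁻¹ = 0 := by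
    have hdvd : p ∣ p ^ 2 := dvd_pow_self p two_ne_zero
    have hcast := cast_inv_sum hp hp5 hdvd (fun i => (i + 1) * (p - 1 - i))
      (fun i hi => by
        rw [Finset.mem_range] at hi
        intro hd
        rcases (Nat.Prime.dvd_mul hp).1 hd with h | h <;>
          exact absurd (Nat.le_of_dvd (by omega) h) (by omega))
    beta_reduce at hcast
    rw [prodsum_zero hp hp5] at hcast
    obtain ⟨y, hy⟩ := lift_zero' hp hp5 hdvd _ hcast
    rw [hy, ← mul_assoc, ← Nat.cast_mul, ← pow_two, ZMod.natCast_self, zero_mul]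
  rw [← h2H] at hT
  have hu2 : IsUnit (2 : G) := by
    have := unit_aux hp hp5 2 (a := 2) (by norm_num) (by omega)
    push_cast at this
    exact this
  have := congrArg (fun z => (2 : G)⁻¹ * z) hT
  simpa [← mul_assoc, ZMod.inv_mul_of_unit _ hu2] using this

lemma H3_lift : (p : ZMod (p ^ 3)) * ∑ i ∈ range (p - 1), (((i + 1 : ℕ)) : ZMod (p ^ 3))⁻¹ = 0 := by
  have hdvd : p ^ 2 ∣ p ^ 3 := pow_dvd_pow p (by norm_num)
  have hcast := cast_inv_sum hp hp5 hdvd (fun i => i + 1)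
    (fun i hi => by
      intro hd
      have h1 : p ≤ i + 1 := Nat.le_of_dvd (Nat.succ_pos i) hd
      rw [Finset.mem_range] at hi
      omega)
  beta_reduce at hcast
  rw [Hbig2_zero hp hp5] at hcast
  obtain ⟨y, hy⟩ := lift_zero' hp hp5 hdvd _ hcast
  rw [hy, ← mul_assoc]
  have hz : ((p : ℕ) : ZMod (p ^ 3)) * ((p ^ 2 : ℕ) : ZMod (p ^ 3)) = 0 := by
    rw [← Nat.cast_mul, show p * p ^ 2 = p ^ 3 by ring, ZMod.natCast_self]
  rw [hz, zero_mul]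

lemma Q3_lift :
    (p : ZMod (p ^ 3)) ^ 2 * ∑ i ∈ range (p - 1), ((((i + 1 : ℕ)) : ZMod (p ^ 3))⁻¹) ^ 2 = 0 := by
  have hdvd : p ∣ p ^ 3 := dvd_pow_self p (by norm_num)
  have hcast : (ZMod.castHom hdvd (ZMod p))
      (∑ i ∈ range (p - 1), ((((i + 1 : ℕ)) : ZMod (p ^ 3))⁻¹) ^ 2)
      = ∑ i ∈ range (p - 1), ((((i + 1 : ℕ)) : ZMod p)⁻¹) ^ 2 := by
    rw [map_sum]
    refine Finset.sum_congr rfl fun i hi => ?_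
    rw [Finset.mem_range] at hi
    have hu : IsUnit ((i + 1 : ℕ) : ZMod (p ^ 3)) := unit_aux hp hp5 3 (by omega) (by omega)
    rw [map_pow, zmod_hom_inv _ _ hu, map_natCast]
  rw [S2 hp hp5] at hcast
  obtain ⟨y, hy⟩ := lift_zero' hp hp5 hdvd _ hcast
  rw [hy, ← mul_assoc]
  have hz : ((p : ℕ) : ZMod (p ^ 3)) ^ 2 * ((p : ℕ) : ZMod (p ^ 3)) = 0 := by
    rw [← Nat.cast_pow, ← Nat.cast_mul, show p ^ 2 * p = p ^ 3 by ring, ZMod.natCast_self]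
  rw [hz, zero_mul]

end wolsten


lemma choose_pred_mod (p : ℕ) (hp : p.Prime) : ∀ i, i < p → (((p - 1).choose i : ℕ) : ZMod p) = (-1) ^ i := by
  intro i
  induction i with
  | zero => simp
  | succ i ih =>
    intro hip
    have hpas := Nat.choose_succ_succ (p - 1) i
    rw [Nat.succ_eq_add_one, Nat.succ_eq_add_one, show p - 1 + 1 = p by omega] at hpas
    have hdvd : p ∣ p.choose (i + 1) := hp.dvd_choose_self (by omega) (by omega)
    have h0 : ((p.choose (i + 1) : ℕ) : ZMod p) = 0 :=
      (ZMod.natCast_eq_zero_iff _ _).2 hdvd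
    rw [hpas] at h0
    push_cast at h0
    rw [ih (by omega)] at h0
    have h1 : (((p - 1).choose (i + 1) : ℕ) : ZMod p) = -(-1) ^ i :=
      eq_neg_of_add_eq_zero_right h0
    rw [h1, pow_succ]
    ring

section prodAsec
variable {p : ℕ} (hp : p.Prime) (hp5 : 5 ≤ p)
include hp hp5

lemma prodA :
    ∏ j ∈ range (p - 1),
        (C ((p : ZMod (p ^ 3)) - ((j + 1 : ℕ) : ZMod (p ^ 3)))
          + C (((j + 1 : ℕ)) : ZMod (p ^ 3)) * X)
      = C ((((p - 1).factorial : ℕ)) : ZMod (p ^ 3)) * (X - 1) ^ (p - 1) := by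
  set R3 := ZMod (p ^ 3)
  set b : ℕ → R3 := fun j => (((j + 1 : ℕ)) : R3)⁻¹ with hb
  have hfac : ∀ j ∈ range (p - 1),
      C ((p : R3) - ((j + 1 : ℕ) : R3)) + C (((j + 1 : ℕ)) : R3) * X
        = C (((j + 1 : ℕ)) : R3) * ((X - 1) + C ((p : R3) * b j)) := by
    intro j hj
    rw [Finset.mem_range] at hj
    have hu : IsUnit (((j + 1 : ℕ)) : R3) := unit_aux hp hp5 3 (by omega) (by omega)
    have h1 : C (((j + 1 : ℕ)) : R3) * C ((p : R3) * b j) = C ((p : ℕ) : R3) := by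
      rw [← map_mul]
      congr 1
      rw [hb, mul_comm ((p:R3)) _, ← mul_assoc, ZMod.mul_inv_of_unit _ hu, one_mul]
    rw [map_sub]
    linear_combination -h1
  rw [Finset.prod_congr rfl hfac, Finset.prod_mul_distrib]
  have hfact : ∏ j ∈ range (p - 1), C (((j + 1 : ℕ)) : R3)
      = C ((((p - 1).factorial : ℕ)) : R3) := by
    rw [← map_prod, ← Nat.cast_prod, Finset.prod_range_add_one_eq_factorial]
  rw [hfact]
  congr 1
  have hcard : (range (p - 1)).card = p - 1 := Finset.card_range _
  have h2key : (p : R3) ^ 2 * ∑ t ∈ (range (p - 1)).powersetCard 2, ∏ i ∈ t, b i = 0 := by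
    have he := two_mul_esymm2 b (range (p - 1))
    have h2u : IsUnit (2 : R3) := by
      have := unit_aux hp hp5 3 (a := 2) (by norm_num) (by omega)
      push_cast at this; exact this
    have hkey : 2 * ((p : R3) ^ 2 * ∑ t ∈ (range (p - 1)).powersetCard 2, ∏ i ∈ t, b i) = 0 := by
      rw [show 2 * ((p : R3) ^ 2 * ∑ t ∈ (range (p - 1)).powersetCard 2, ∏ i ∈ t, b i)
          = (p : R3) ^ 2 * (2 * ∑ t ∈ (range (p - 1)).powersetCard 2, ∏ i ∈ t, b i) by ring,
        he, mul_sub]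
      have hS : (p : R3) ^ 2 * (∑ i ∈ range (p - 1), b i) ^ 2
          = ((p : R3) * ∑ i ∈ range (p - 1), b i) ^ 2 := by ring
      rw [hS, H3_lift hp hp5]
      have hQ : (p : R3) ^ 2 * ∑ i ∈ range (p - 1), (b i) ^ 2 = 0 := Q3_lift hp hp5
      rw [hQ]
      simp
    have := congrArg (fun z => (2 : R3)⁻¹ * z) hkey
    simpa [← mul_assoc, ZMod.inv_mul_of_unit _ h2u] using this
  have hk := prod_add_key (p : R3) (pow_self_zero hp hp5 3) (X - 1) (range (p - 1)) b
    (H3_lift hp hp5) h2key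
  rw [hk, hcard]

end prodAsec

section morley
variable {p : ℕ} (hp : p.Prime) (hp5 : 5 ≤ p) {k : ℕ} (hk : p = 2 * k + 1)
include hp hp5 hk

lemma binom_central :
    (((2 * k).choose k : ℕ) : ZMod (p ^ 2))
      = (-1) ^ k * (1 - (p : ZMod (p ^ 2)) * ∑ i ∈ range k, (((i + 1 : ℕ)) : ZMod (p ^ 2))⁻¹) := by
  set G := ZMod (p ^ 2)
  set b : ℕ → G := fun i => (((i + 1 : ℕ)) : G)⁻¹ with hb
  have hppG : (p : G) * (p : G) = 0 := by
    rw [← Nat.cast_mul, ← pow_two, ZMod.natCast_self]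
  have hkfu : IsUnit ((k.factorial : ℕ) : G) := by
    rw [ZMod.isUnit_iff_coprime]
    apply Nat.Coprime.pow_right
    have : ¬ p ∣ k.factorial := by
      rw [Nat.Prime.dvd_factorial hp]
      omega
    exact ((hp.coprime_iff_not_dvd).2 this).symm
  -- ℕ identity
  have hnat : (2 * k).choose k * (k.factorial * k.factorial) = (2 * k).factorial := by
    have h := Nat.choose_mul_factorial_mul_factorial (show k ≤ 2 * k by omega)
    rw [show 2 * k - k = k by omega] at h
    rw [← h]; ring
  have hsplit : (2 * k).factorial = k.factorial * ∏ i ∈ range k, (k + 1 + i) := by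
    rw [← Finset.prod_range_add_one_eq_factorial, ← Finset.prod_range_add_one_eq_factorial,
      show 2 * k = k + k by ring, Finset.prod_range_add]
    congr 1
    exact Finset.prod_congr rfl fun i _ => by ring
  -- the product in G
  have hprod : ∏ i ∈ range k, (((k + 1 + i : ℕ)) : G) = (-1) ^ k * (k.factorial : G)
      * (1 - (p : G) * ∑ i ∈ range k, b i) := by
    have hrefl := Finset.prod_range_reflect (fun i => (((k + 1 + i : ℕ)) : G)) k
    rw [← hrefl]
    beta_reduce
    have hcongr : ∀ i ∈ range k, (((k + 1 + (k - 1 - i) : ℕ)) : G)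
        = (-(((i + 1 : ℕ)) : G)) * (1 - (p : G) * b i) := by
      intro i hi
      rw [Finset.mem_range] at hi
      have hnum : k + 1 + (k - 1 - i) = p - (i + 1) := by omega
      have hu : IsUnit (((i + 1 : ℕ)) : G) := unit_aux hp hp5 2 (by omega) (by omega)
      rw [hnum, Nat.cast_sub (by omega)]
      have hinv : (((i + 1 : ℕ)) : G) * b i = 1 := ZMod.mul_inv_of_unit _ hu
      calc ((p : ℕ) : G) - (((i + 1 : ℕ)) : G)
          = -(((i + 1 : ℕ)) : G) + ((p:ℕ) : G) * ((((i + 1 : ℕ)) : G) * b i) := by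
            rw [hinv, mul_one]; ring
        _ = (-(((i + 1 : ℕ)) : G)) * (1 - (p : G) * b i) := by push_cast; ring
    rw [Finset.prod_congr rfl hcongr]
    have : ∀ i ∈ range k, (-(((i + 1 : ℕ)) : G)) * (1 - (p : G) * b i)
        = (-1) * ((((i + 1 : ℕ)) : G) * (1 - (p : G) * b i)) := fun i _ => by ring
    rw [Finset.prod_congr rfl this, Finset.prod_mul_distrib, Finset.prod_const,
      Finset.prod_mul_distrib, prod_one_sub_eq (p : G) hppG, ← Nat.cast_prod,
      Finset.prod_range_add_one_eq_factorial, Finset.card_range]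
    ring
  -- combine
  have hGid : (((2 * k).choose k : ℕ) : G) * ((k.factorial : ℕ) : G) * ((k.factorial : ℕ) : G)
      = ((-1) ^ k * (1 - (p : G) * ∑ i ∈ range k, b i)) * ((k.factorial : ℕ) : G)
        * ((k.factorial : ℕ) : G) := by
    have hc := congrArg (fun m : ℕ => ((m : ℕ) : G)) hnat
    push_cast at hc
    rw [Nat.cast_mul (α := ZMod (p ^ 2)), Nat.cast_mul (α := ZMod (p ^ 2))] at hc
    rw [show ((2*k).choose k : G) * (k.factorial : G) * (k.factorial : G)
        = ((2*k).choose k : G) * ((k.factorial : G) * (k.factorial : G)) by ring, hc]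
    have hc2 := congrArg (fun m : ℕ => ((m : ℕ) : G)) hsplit
    push_cast at hc2
    rw [Nat.cast_mul (α := ZMod (p ^ 2)), Nat.cast_prod (R := ZMod (p ^ 2))] at hc2
    rw [hc2]
    rw [hprod]
    push_cast
    ring
  exact hkfu.mul_right_cancel (hkfu.mul_right_cancel hGid)



lemma two_pow_p :
    ((2 : ZMod (p ^ 2))) ^ p
      = 2 - (p : ZMod (p ^ 2)) * ∑ i ∈ range k, (((i + 1 : ℕ)) : ZMod (p ^ 2))⁻¹ := by
  set G := ZMod (p ^ 2)
  set b : ℕ → G := fun i => (((i + 1 : ℕ)) : G)⁻¹ with hb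
  have hchoose : ∀ i ∈ range (p - 1), ((p.choose (i + 1) : ℕ) : G)
      = (p : G) * (-1) ^ i * b i := by
    intro i hi
    rw [Finset.mem_range] at hi
    have hu : IsUnit (((i + 1 : ℕ)) : G) := unit_aux hp hp5 2 (by omega) (by omega)
    have hnat : p * (p - 1).choose i = p.choose (i + 1) * (i + 1) := by
      have h := Nat.add_one_mul_choose_eq (p - 1) i
      rw [show p - 1 + 1 = p by omega] at h
      rw [h]
    have hdvd : p ∣ p ^ 2 := dvd_pow_self p two_ne_zero
    have hlift : (p : G) * (((p - 1).choose i : ℕ) : G) = (p : G) * (-1) ^ i := by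
      set x : G := (((p - 1).choose i : ℕ) : G) - (-1) ^ i with hx
      have hcast : ZMod.castHom hdvd (ZMod p) x = 0 := by
        rw [hx, map_sub, map_natCast, map_pow, map_neg, map_one,
          choose_pred_mod p hp i (by omega), sub_self]
      obtain ⟨y, hy⟩ := lift_zero' hp hp5 hdvd x hcast
      have hpx : (p : G) * x = 0 := by
        rw [hy, ← mul_assoc, ← Nat.cast_mul, ← pow_two, ZMod.natCast_self, zero_mul]
      have hxe : (((p - 1).choose i : ℕ) : G) = (-1) ^ i + x := by rw [hx]; ring
      rw [hxe, mul_add, hpx, add_zero]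
    have hGid : (((i + 1 : ℕ)) : G) * ((p.choose (i + 1) : ℕ) : G) = (p : G) * (-1) ^ i := by
      have hc := congrArg (fun m : ℕ => ((m : ℕ) : G)) hnat
      push_cast at hc ⊢
      rw [Nat.cast_mul, Nat.cast_mul, Nat.cast_add, Nat.cast_one] at hc
      rw [← hlift, hc]
      push_cast
      ring
    calc ((p.choose (i + 1) : ℕ) : G)
        = (b i * (((i + 1 : ℕ)) : G)) * ((p.choose (i + 1) : ℕ) : G) := by
          rw [ZMod.inv_mul_of_unit _ hu, one_mul]
      _ = b i * ((((i + 1 : ℕ)) : G) * ((p.choose (i + 1) : ℕ) : G)) := by ring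
      _ = b i * ((p : G) * (-1) ^ i) := by rw [hGid]
      _ = (p : G) * (-1) ^ i * b i := by ring
  have hsum : ((2 ^ p : ℕ) : G) = 2 + ∑ i ∈ range (p - 1), ((p.choose (i + 1) : ℕ) : G) := by
    rw [← Nat.sum_range_choose p]
    push_cast
    rw [show p + 1 = (p - 1 + 1) + 1 by omega]
    rw [Finset.sum_range_succ]
    rw [Nat.cast_add, Nat.cast_sum]
    rw [sum_shift (fun i => ((p.choose i : ℕ) : G)) (p - 1 + 1) (by omega)]
    beta_reduce
    simp only [Nat.add_sub_cancel, Nat.choose_zero_right, Nat.cast_one]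
    rw [show p - 1 + 1 = p by omega, Nat.choose_self]
    push_cast
    ring
  have hA : ∑ i ∈ range (p - 1), ((p.choose (i + 1) : ℕ) : G)
      = (p : G) * ∑ i ∈ range (p - 1), (-1) ^ i * b i := by
    rw [Finset.mul_sum, Finset.sum_congr rfl hchoose]
    exact Finset.sum_congr rfl fun i _ => by ring
  have hpair : ∑ i ∈ range (p - 1), (b i - (-1) ^ i * b i) = ∑ j ∈ range k, b j := by
    rw [show p - 1 = 2 * k by omega]
    rw [sum_range_two_mul (fun i => b i - (-1) ^ i * b i) k]
    refine Finset.sum_congr rfl fun j hj => ?_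
    rw [Finset.mem_range] at hj
    have he : ((-1 : G)) ^ (2 * j) = 1 := by
      rw [pow_mul, neg_one_sq, one_pow]
    have ho : ((-1 : G)) ^ (2 * j + 1) = -1 := by
      rw [pow_succ, he, one_mul]
    have h2u : IsUnit ((2 : ℕ) : G) := unit_aux hp hp5 2 (by norm_num) (by omega)
    have hju : IsUnit (((j + 1 : ℕ)) : G) := unit_aux hp hp5 2 (by omega) (by omega)
    have hb2 : b (2 * j + 1) = ((2 : ℕ) : G)⁻¹ * b j := by
      rw [hb]
      beta_reduce
      rw [show 2 * j + 1 + 1 = 2 * (j + 1) by ring]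
      rw [show ((2 * (j + 1) : ℕ) : G) = ((2:ℕ) : G) * (((j + 1 : ℕ)) : G) by rw [Nat.cast_mul]]
      rw [zmod_mul_inv_eq _ _ h2u hju]
    have h21 : ((2:ℕ) : G) * ((2 : ℕ) : G)⁻¹ = 1 := ZMod.mul_inv_of_unit _ h2u
    rw [he, ho, hb2]
    linear_combination b j * h21
  have hHbig : ∑ i ∈ range (p - 1), b i = 0 := Hbig2_zero hp hp5
  have hAval : ∑ i ∈ range (p - 1), (-1) ^ i * b i = - ∑ j ∈ range k, b j := by
    have h := hpair
    rw [Finset.sum_sub_distrib, hHbig, zero_sub] at h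
    rw [← neg_neg (∑ i ∈ range (p - 1), (-1) ^ i * b i), h]
  have h2p : ((2 : G)) ^ p = ((2 ^ p : ℕ) : G) := by push_cast; ring
  rw [h2p, hsum, hA, hAval]
  ring

lemma morley_G :
    ((-1 : ZMod (p ^ 2))) ^ k * (((2 * k).choose k : ℕ) : ZMod (p ^ 2))
      = (4 : ZMod (p ^ 2)) ^ (p - 1) := by
  set G := ZMod (p ^ 2)
  set Hk := ∑ i ∈ range k, (((i + 1 : ℕ)) : G)⁻¹ with hHk
  have hppG : (p : G) * (p : G) = 0 := by
    rw [← Nat.cast_mul, ← pow_two, ZMod.natCast_self]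
  have hc := binom_central hp hp5 hk
  have h2 := two_pow_p hp hp5 hk
  have h4u : IsUnit ((4 : ℕ) : G) := unit_aux hp hp5 2 (by norm_num) (by omega)
  have key : ((4:ℕ) : G) * ((4 : G) ^ (p - 1)) = ((4:ℕ) : G) * (1 - (p : G) * Hk) := by
    have e1 : ((4:ℕ) : G) * ((4 : G) ^ (p - 1)) = (4 : G) ^ p := by
      push_cast
      rw [← pow_succ']
      congr 1
      omega
    have e2 : (4 : G) ^ p = ((2 : G) ^ p) ^ 2 := by
      rw [← pow_mul, mul_comm p 2, pow_mul]
      norm_num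
    rw [e1, e2, h2]
    have : (2 - (p : G) * Hk) ^ 2 = 4 - 4 * ((p:G) * Hk) + (Hk * Hk) * ((p:G) * (p:G)) := by
      ring
    rw [this, hppG, mul_zero, add_zero]
    push_cast
    ring
  have hfin : (4 : G) ^ (p - 1) = 1 - (p : G) * Hk := h4u.mul_left_cancel key
  rw [hc, hfin, ← mul_assoc]
  have : ((-1 : G)) ^ k * (-1) ^ k = 1 := by
    rw [← pow_add, ← two_mul, pow_mul, neg_one_sq, one_pow]
  rw [this, one_mul]

end morley

-- step 1
lemma step1 (p k : ℕ) (hk : p = 2 * k + 1) (hp5 : 5 ≤ p) :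
    v ((p + 3) / 2)
      = (p : ℤ) ^ 2 * ((1 - X) * ∏ j ∈ range (p - 1),
          (C ((p : ℤ) - ((j : ℤ) + 1)) + C ((j : ℤ) + 1) * X)).coeff k := by
  have hn : (p + 3) / 2 = k + 2 := by omega
  rw [hn]
  have hv : v (k + 2) = ((1 - X) * ∏ j ∈ range (2 * (k + 2) - 2),
      (C ((2 * (k + 2) : ℤ) - 3 - (j : ℤ)) + C (j : ℤ) * X)).coeff (k + 2 - 1) := by
    rw [v, if_neg (by omega)]
    push_cast
    norm_num
  rw [hv]
  have hfac : ∀ j ∈ range (2 * (k + 2) - 2),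
      C ((2 * (k + 2) : ℤ) - 3 - (j : ℤ)) + C (j : ℤ) * X
        = C ((p : ℤ) - (j : ℤ)) + C (j : ℤ) * X := by
    intro j _
    rw [show (2 * (k + 2) : ℤ) - 3 - (j : ℤ) = (p : ℤ) - (j : ℤ) by push_cast [hk]; ring]
  rw [Finset.prod_congr rfl hfac]
  have hr : 2 * (k + 2) - 2 = (p - 1) + 1 + 1 := by omega
  rw [hr, Finset.prod_range_succ, Finset.prod_range_succ']
  have h0 : C ((p : ℤ) - ((0:ℕ) : ℤ)) + C ((0:ℕ) : ℤ) * X = C (p : ℤ) := by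
    simp
  have hplast : C ((p : ℤ) - ((p - 1 + 1 : ℕ) : ℤ)) + C ((p - 1 + 1 : ℕ) : ℤ) * X
      = C (p : ℤ) * X := by
    rw [show ((p - 1 + 1 : ℕ) : ℤ) = (p : ℤ) by push_cast; omega]
    simp
  rw [h0, hplast]
  have hmid : ∀ j ∈ range (p - 1),
      C ((p : ℤ) - ((j + 1 : ℕ) : ℤ)) + C ((j + 1 : ℕ) : ℤ) * X
        = C ((p : ℤ) - ((j : ℤ) + 1)) + C ((j : ℤ) + 1) * X := by
    intro j _
    rw [show ((j + 1 : ℕ) : ℤ) = (j : ℤ) + 1 by push_cast; ring]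
  rw [Finset.prod_congr rfl hmid]
  set Q : ℤ[X] := ∏ j ∈ range (p - 1), (C ((p : ℤ) - ((j : ℤ) + 1)) + C ((j : ℤ) + 1) * X)
  have hrearr : (1 - X) * (Q * C (p:ℤ) * (C (p:ℤ) * X))
      = C (p:ℤ) * (C (p:ℤ) * (X * ((1 - X) * Q))) := by ring
  rw [hrearr, coeff_C_mul, coeff_C_mul, show k + 2 - 1 = k + 1 from rfl, coeff_X_mul]
  ring

lemma step2 (p k : ℕ) (hp : p.Prime) (hp5 : 5 ≤ p) (hk : p = 2 * k + 1) :
    ((((1 - X) * ∏ j ∈ range (p - 1),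
        (C ((p : ℤ) - ((j : ℤ) + 1)) + C ((j : ℤ) + 1) * X)).coeff k : ℤ) : ZMod (p ^ 3))
      = ((((p - 1).factorial : ℤ) * (-1) ^ k * (p.choose k : ℤ) : ℤ) : ZMod (p ^ 3)) := by
  set R3 := ZMod (p ^ 3)
  set φ := Int.castRingHom R3 with hφ
  have hcoeff : ((((1 - X) * ∏ j ∈ range (p - 1),
      (C ((p : ℤ) - ((j : ℤ) + 1)) + C ((j : ℤ) + 1) * X)).coeff k : ℤ) : R3)
      = (((1 - X) * ∏ j ∈ range (p - 1),
        (C ((p : ℤ) - ((j : ℤ) + 1)) + C ((j : ℤ) + 1) * X)).map φ).coeff k := by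
    rw [Polynomial.coeff_map]
    rfl
  rw [hcoeff, Polynomial.map_mul, Polynomial.map_sub, Polynomial.map_one, Polynomial.map_X,
    Polynomial.map_prod]
  have hfac : ∀ j ∈ range (p - 1),
      (C ((p : ℤ) - ((j : ℤ) + 1)) + C ((j : ℤ) + 1) * X).map φ
        = C ((p : R3) - ((j + 1 : ℕ) : R3)) + C (((j + 1 : ℕ)) : R3) * X := by
    intro j _
    rw [Polynomial.map_add, Polynomial.map_mul, Polynomial.map_C, Polynomial.map_C,
      Polynomial.map_X]
    have h1 : φ ((p : ℤ) - ((j : ℤ) + 1)) = (p : R3) - ((j + 1 : ℕ) : R3) := by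
      rw [hφ, eq_intCast]
      push_cast
      ring
    have h2 : φ ((j : ℤ) + 1) = (((j + 1 : ℕ)) : R3) := by
      rw [hφ, eq_intCast]
      push_cast
      ring
    rw [h1, h2]
  rw [Finset.prod_congr rfl hfac, prodA hp hp5]
  set F : R3 := (((p - 1).factorial : ℕ) : R3)
  have hpow : (1 - X : R3[X]) * (C F * (X - 1) ^ (p - 1)) = C F * (-(X - 1) ^ p) := by
    have h : (X - 1 : R3[X]) ^ p = (X - 1) ^ (p - 1) * (X - 1) ^ 1 := by
      rw [← pow_add]
      congr 1
      omega
    rw [h]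
    ring
  rw [hpow]
  have hX1 : (X - 1 : R3[X]) = X + C (-1) := by
    rw [map_neg, map_one]
    ring
  rw [coeff_C_mul, hX1, coeff_neg, coeff_X_add_C_pow]
  have hsign : ((-1 : R3)) ^ (p - k) = -(-1) ^ k := by
    rw [show p - k = k + 1 by omega, pow_succ]
    ring
  rw [hsign]
  push_cast
  ring

theorem v_mod_p5 (p : ℕ) (hp : p.Prime) (hp5 : 5 ≤ p) :
    v ((p + 3) / 2) ≡
      2 * (p : ℤ) ^ 3 * (1 - (p : ℤ)) * ((p - 1).factorial : ℤ) * 4 ^ (p - 1)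
      [ZMOD (p : ℤ) ^ 5] := by
  obtain ⟨k, hk⟩ := (hp.odd_of_ne_two (by omega))
  have hk : p = 2 * k + 1 := hk
  have hpk : (p : ℤ) = 2 * (k : ℤ) + 1 := by exact_mod_cast congrArg (Nat.cast : ℕ → ℤ) hk
  rw [step1 p k hk hp5]
  set d : ℤ := ((1 - X) * ∏ j ∈ range (p - 1),
      (C ((p : ℤ) - ((j : ℤ) + 1)) + C ((j : ℤ) + 1) * X)).coeff k with hd
  -- d ≡ (p-1)! * (-1)^k * choose p k  mod p^3
  have c1 : d ≡ ((p - 1).factorial : ℤ) * (-1) ^ k * (p.choose k : ℤ) [ZMOD (p : ℤ) ^ 3] := by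
    have h := (ZMod.intCast_eq_intCast_iff _ _ _).1 (step2 p k hp hp5 hk)
    rwa [show ((p ^ 3 : ℕ) : ℤ) = (p : ℤ) ^ 3 by push_cast; ring] at h
  -- Morley as an integer congruence
  have M : ((-1 : ℤ)) ^ k * ((2 * k).choose k : ℤ) ≡ 4 ^ (p - 1) [ZMOD (p : ℤ) ^ 2] := by
    have hZ : ((((-1 : ℤ)) ^ k * ((2 * k).choose k : ℤ) : ℤ) : ZMod (p ^ 2))
        = (((4 : ℤ) ^ (p - 1) : ℤ) : ZMod (p ^ 2)) := by
      push_cast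
      exact_mod_cast morley_G hp hp5 hk
    have h := (ZMod.intCast_eq_intCast_iff _ _ _).1 hZ
    rwa [show ((p ^ 2 : ℕ) : ℤ) = (p : ℤ) ^ 2 by push_cast; ring] at h
  -- the ℕ identity (k+1) * C(p,k) = p * C(2k,k)
  have hnat2 : p * ((2 * k).choose k) = p.choose k * (k + 1) := by
    have h := Nat.add_one_mul_choose_eq (2 * k) k
    rw [show 2 * k + 1 = p by omega] at h
    have hsymm : p.choose (k + 1) = p.choose k := by
      have h2 := Nat.choose_symm (show k + 1 ≤ p by omega)
      rw [show p - (k + 1) = k by omega] at h2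
      exact h2.symm
    rw [hsymm] at h
    exact h
  have e1 : ((k : ℤ) + 1) * ((-1) ^ k * (p.choose k : ℤ))
      = (p : ℤ) * ((-1) ^ k * ((2 * k).choose k : ℤ)) := by
    have h := congrArg (Nat.cast : ℕ → ℤ) hnat2
    push_cast at h
    linear_combination ((-1 : ℤ)) ^ k * h.symm
  have e2 : (p : ℤ) * ((-1) ^ k * ((2 * k).choose k : ℤ))
      ≡ (p : ℤ) * 4 ^ (p - 1) [ZMOD (p : ℤ) ^ 3] := by
    have h := M.mul_left' (c := (p : ℤ))
    rwa [show (p : ℤ) * (p : ℤ) ^ 2 = (p : ℤ) ^ 3 by ring] at h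
  have e3 : ((k : ℤ) + 1) * (2 * (p : ℤ) * (1 - (p : ℤ)) * 4 ^ (p - 1))
      ≡ (p : ℤ) * 4 ^ (p - 1) [ZMOD (p : ℤ) ^ 3] := by
    rw [Int.modEq_iff_dvd]
    exact ⟨4 ^ (p - 1), by rw [hpk]; ring⟩
  have e4 : ((k : ℤ) + 1) * ((-1) ^ k * (p.choose k : ℤ))
      ≡ ((k : ℤ) + 1) * (2 * (p : ℤ) * (1 - (p : ℤ)) * 4 ^ (p - 1)) [ZMOD (p : ℤ) ^ 3] := by
    rw [e1]
    exact e2.trans e3.symm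
  have e5 : ((-1 : ℤ)) ^ k * (p.choose k : ℤ)
      ≡ 2 * (p : ℤ) * (1 - (p : ℤ)) * 4 ^ (p - 1) [ZMOD (p : ℤ) ^ 3] := by
    have hgcd : Int.gcd ((p : ℤ) ^ 3) ((k : ℤ) + 1) = 1 := by
      have h1 : ((p : ℤ) ^ 3) = ((p ^ 3 : ℕ) : ℤ) := by push_cast; ring
      have h2 : ((k : ℤ) + 1) = ((k + 1 : ℕ) : ℤ) := by push_cast; ring
      rw [h1, h2, Int.gcd_natCast_natCast]
      have hcop : Nat.Coprime p (k + 1) := (hp.coprime_iff_not_dvd).2 (fun hd => by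
        have := Nat.le_of_dvd (by omega) hd
        omega)
      exact (hcop.pow_left 3)
    have h := e4.cancel_left_div_gcd (by positivity) 
    rwa [hgcd, Nat.cast_one, Int.ediv_one] at h
  have e6 := (e5.mul_left (((p - 1).factorial : ℤ))).trans (Int.ModEq.refl _)
  have c2 : d ≡ ((p - 1).factorial : ℤ) * (2 * (p : ℤ) * (1 - (p : ℤ)) * 4 ^ (p - 1))
      [ZMOD (p : ℤ) ^ 3] := by
    refine c1.trans ?_
    have := e5.mul_left (((p - 1).factorial : ℤ))
    rwa [show ((p - 1).factorial : ℤ) * ((-1) ^ k * (p.choose k : ℤ))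
        = ((p - 1).factorial : ℤ) * (-1) ^ k * (p.choose k : ℤ) by ring] at this
  -- multiply by p^2
  have final := c2.mul_left' (c := (p : ℤ) ^ 2)
  rw [show (p : ℤ) ^ 2 * (p : ℤ) ^ 3 = (p : ℤ) ^ 5 by ring] at final
  rwa [show (p : ℤ) ^ 2 * (((p - 1).factorial : ℤ) * (2 * (p : ℤ) * (1 - (p : ℤ)) * 4 ^ (p - 1)))
      = 2 * (p : ℤ) ^ 3 * (1 - (p : ℤ)) * ((p - 1).factorial : ℤ) * 4 ^ (p - 1) by ring] at final
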